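/- Let H ∈ (1/2,1), let K : (0,∞) → ℝ be locally integrable, and suppose there exists c_Z ≠ 0 such that K(t) · t^{3/2−H} → c_Z as t → ∞. Then D(τ) = ∫₀^τ (τ−u) K(u) du satisfies D(τ) · τ^{−H−1/2} → c_Z Γ(H−1/2) / Γ(H+3/2) as τ → ∞; equivalently D(τ) = c_Z ( Γ(H−1/2)/Γ(H+3/2) ) τ^{H+1/2} (1+o(1)) as τ → ∞. -/

import Mathlib

open MeasureTheory Real Set Filter Topology

private lemma rpow_integrableOn_Ioc {a τ : ℝ} (ha : -1 < a) :
    IntegrableOn (fun u : ℝ => u ^ a) (Set.Ioc 0 τ) := by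
  rcases le_or_gt 0 τ with hτ | hτ
  · rw [← intervalIntegrable_iff_integrableOn_Ioc_of_le hτ]
    exact intervalIntegral.intervalIntegrable_rpow' ha
  · rw [Set.Ioc_eq_empty (by linarith : ¬ (0:ℝ) < τ)]
    exact integrableOn_empty

private lemma linear_rpow_integrableOn {a τ c : ℝ} (ha : -1 < a) :
    IntegrableOn (fun u : ℝ => (c - u) * u ^ a) (Set.Ioc 0 τ) := by
  have h1 := rpow_integrableOn_Ioc (τ := τ) ha
  have h2 := rpow_integrableOn_Ioc (τ := τ) (show (-1:ℝ) < a + 1 by linarith)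
  have h3 : IntegrableOn (fun u : ℝ => c * u ^ a - u ^ (a + 1)) (Set.Ioc 0 τ) :=
    (h1.const_mul c).sub h2
  refine MeasureTheory.IntegrableOn.congr_fun h3 (fun u hu => ?_) measurableSet_Ioc
  rw [Real.rpow_add_one (ne_of_gt hu.1)]
  ring

private lemma linear_rpow_integral {a : ℝ} (ha : -1 < a) (τ : ℝ) (hτ : 0 ≤ τ) :
    ∫ u in Set.Ioc (0:ℝ) τ, (τ - u) * u ^ a
      = τ ^ (a + 2) * (1 / (a + 1) - 1 / (a + 2)) := by
  have ha1 : a + 1 ≠ 0 := by linarith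
  have ha2 : a + 2 ≠ 0 := by linarith
  have key : Set.EqOn (fun u : ℝ => (τ - u) * u ^ a)
      (fun u : ℝ => τ * u ^ a - u ^ (a + 1)) (Set.Ioc 0 τ) := by
    intro u hu
    simp only
    rw [Real.rpow_add_one (ne_of_gt hu.1)]
    ring
  rw [MeasureTheory.setIntegral_congr_fun measurableSet_Ioc key,
    MeasureTheory.integral_sub ((rpow_integrableOn_Ioc ha).const_mul τ)
      (rpow_integrableOn_Ioc (show (-1:ℝ) < a + 1 by linarith)),
    MeasureTheory.integral_const_mul,
    ← intervalIntegral.integral_of_le hτ, ← intervalIntegral.integral_of_le hτ,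
    integral_rpow (Or.inl ha), integral_rpow (Or.inl (show (-1:ℝ) < a + 1 by linarith)),
    Real.zero_rpow ha1, Real.zero_rpow (show a + 1 + 1 ≠ 0 by linarith)]
  rcases hτ.eq_or_lt with h | h
  · rw [← h, Real.zero_rpow (show a + 1 ≠ 0 by linarith),
      Real.zero_rpow (show a + 1 + 1 ≠ 0 by linarith),
      Real.zero_rpow (show a + 2 ≠ 0 by linarith)]
    ring
  · have hpow : τ * τ ^ (a + 1) = τ ^ (a + 2) := by
      conv_rhs => rw [show a + 2 = (a + 1) + 1 by ring, Real.rpow_add_one (ne_of_gt h)]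
      exact mul_comm _ _
    rw [show a + 1 + 1 = a + 2 by ring, sub_zero, sub_zero, ← hpow]
    field_simp

theorem general_kernel_D_long_time (H : ℝ) (hH : H ∈ Set.Ioo (1/2 : ℝ) 1)
    (K : ℝ → ℝ) (hK1 : ∀ T : ℝ, 0 < T → IntegrableOn K (Set.Ioc 0 T))
    (cZ : ℝ) (hcZ : cZ ≠ 0)
    (hKasym : Tendsto (fun t : ℝ => K t * t ^ (3/2 - H)) atTop (𝓝 cZ)) :
    Tendsto (fun τ : ℝ => (∫ u in (0:ℝ)..τ, (τ - u) * K u) * τ ^ (-H - 1/2))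
      atTop
      (𝓝 (cZ * Real.Gamma (H - 1/2) / Real.Gamma (H + 3/2))) := by
  obtain ⟨hH1, hH2⟩ := hH
  set a : ℝ := H - 3/2 with ha_def
  have ha1 : (-1:ℝ) < a := by rw [ha_def]; linarith
  have ha1' : (0:ℝ) < a + 1 := by rw [ha_def]; linarith
  have ha2' : (0:ℝ) < a + 2 := by linarith
  set C : ℝ := 1 / (a + 1) - 1 / (a + 2) with hC_def
  have hC_pos : 0 < C := by
    rw [hC_def, sub_pos]
    exact one_div_lt_one_div_of_lt ha1' (by linarith)
  -- the Gamma value equals cZ * C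
  have hGamma : cZ * Real.Gamma (H - 1/2) / Real.Gamma (H + 3/2) = cZ * C := by
    have hne1 : H - 1/2 ≠ 0 := by linarith
    have hne2 : H + 1/2 ≠ 0 := by linarith
    have h1 : Real.Gamma (H + 3/2) = (H + 1/2) * ((H - 1/2) * Real.Gamma (H - 1/2)) := by
      rw [show H + 3/2 = (H + 1/2) + 1 by ring, Real.Gamma_add_one hne2,
        show H + 1/2 = (H - 1/2) + 1 by ring, Real.Gamma_add_one hne1]
    have hGpos : 0 < Real.Gamma (H - 1/2) := Real.Gamma_pos_of_pos (by linarith)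
    have h4 : (1:ℝ)/(H - 1/2) - 1/(H + 1/2) = 1/((H - 1/2) * (H + 1/2)) := by
      rw [div_sub_div _ _ hne1 hne2]
      norm_num
    rw [h1, hC_def, ha_def, show H - 3/2 + 1 = H - 1/2 by ring,
      show H - 3/2 + 2 = H + 1/2 by ring, h4, mul_one_div,
      div_eq_div_iff (mul_ne_zero hne2 (mul_ne_zero hne1 hGpos.ne'))
        (mul_ne_zero hne1 hne2)]
    ring
  rw [hGamma]
  -- the error term
  set E : ℝ → ℝ := fun τ => ∫ u in Set.Ioc (0:ℝ) τ, (τ - u) * (K u - cZ * u ^ a) with hE_def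
  -- integrability facts for τ > 0
  have hKint : ∀ τ : ℝ, 0 < τ → IntegrableOn (fun u => (τ - u) * K u) (Set.Ioc 0 τ) := by
    intro τ hτ
    refine (hK1 τ hτ).bdd_mul (c := τ)
      ((continuous_const.sub continuous_id).aestronglyMeasurable) ?_
    filter_upwards [ae_restrict_mem measurableSet_Ioc] with u hu
    rw [Real.norm_eq_abs, abs_of_nonneg (by linarith [hu.2] : 0 ≤ τ - u)]
    linarith [hu.1]
  have hmodelint : ∀ τ : ℝ, IntegrableOn (fun u => (τ - u) * (cZ * u ^ a)) (Set.Ioc 0 τ) := by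
    intro τ
    refine MeasureTheory.IntegrableOn.congr_fun
      ((linear_rpow_integrableOn (τ := τ) (c := τ) ha1).const_mul cZ)
      (fun u _ => by ring) measurableSet_Ioc
  have hEint : ∀ τ : ℝ, 0 < τ →
      IntegrableOn (fun u => (τ - u) * (K u - cZ * u ^ a)) (Set.Ioc 0 τ) := by
    intro τ hτ
    refine MeasureTheory.IntegrableOn.congr_fun ((hKint τ hτ).sub (hmodelint τ))
      (fun u _ => by simp only [Pi.sub_apply]; ring) measurableSet_Ioc
  -- model integral value
  have hmodel : ∀ τ : ℝ, 0 ≤ τ →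
      ∫ u in Set.Ioc (0:ℝ) τ, (τ - u) * (cZ * u ^ a) = cZ * C * τ ^ (a + 2) := by
    intro τ hτ
    have : Set.EqOn (fun u : ℝ => (τ - u) * (cZ * u ^ a))
        (fun u : ℝ => cZ * ((τ - u) * u ^ a)) (Set.Ioc 0 τ) := fun u _ => by simp only; ring
    rw [MeasureTheory.setIntegral_congr_fun measurableSet_Ioc this,
      MeasureTheory.integral_const_mul, linear_rpow_integral ha1 τ hτ, ← hC_def]
    ring
  -- main reduction
  have hEtend : Tendsto (fun τ : ℝ => E τ * τ ^ (-H - 1/2)) atTop (𝓝 0) := by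
    rw [NormedAddCommGroup.tendsto_nhds_zero]
    intro ε hε
    set ε' : ℝ := ε / (2 * (C + 1)) with hε'_def
    have hε'_pos : 0 < ε' := by
      rw [hε'_def]; positivity
    have hε'C : ε' * C < ε / 2 := by
      have h : ε' * (C + 1) = ε / 2 := by rw [hε'_def]; field_simp
      nlinarith
    obtain ⟨A₀, hA₀⟩ := Filter.eventually_atTop.mp (hKasym (Metric.ball_mem_nhds cZ hε'_pos))
    set A : ℝ := max A₀ 1 with hA_def
    have hA0 : (0:ℝ) < A := lt_of_lt_of_le one_pos (le_max_right _ _)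
    have hAprop : ∀ t : ℝ, A ≤ t → |K t * t ^ (3/2 - H) - cZ| ≤ ε' := by
      intro t ht
      have := hA₀ t (le_trans (le_max_left _ _) ht)
      rw [Metric.mem_ball, Real.dist_eq] at this
      exact this.le
    set M : ℝ := ∫ u in Set.Ioc (0:ℝ) A, |K u - cZ * u ^ a| with hM_def
    have hM_int : IntegrableOn (fun u => |K u - cZ * u ^ a|) (Set.Ioc 0 A) :=
      ((hK1 A hA0).sub ((rpow_integrableOn_Ioc ha1).const_mul cZ)).abs
    have htend : Tendsto (fun τ : ℝ => M * τ ^ (1/2 - H)) atTop (𝓝 0) := by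
      have h := (tendsto_rpow_neg_atTop (show (0:ℝ) < H - 1/2 by linarith)).const_mul M
      rw [mul_zero] at h
      refine h.congr (fun τ => ?_)
      rw [show -(H - 1/2) = 1/2 - H by ring]
    have hsmall := htend.eventually_lt_const (show (0:ℝ) < ε / 2 by positivity)
    filter_upwards [hsmall, eventually_ge_atTop A] with τ hτ1 hτ2
    have hτ0 : (0:ℝ) < τ := lt_of_lt_of_le hA0 hτ2
    have hrpos : (0:ℝ) < τ ^ (-H - 1/2) := Real.rpow_pos_of_pos hτ0 _
    -- integrability on pieces
    have hsub1 : Set.Ioc (0:ℝ) A ⊆ Set.Ioc 0 τ := Set.Ioc_subset_Ioc_right hτ2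
    have hsub2 : Set.Ioc A τ ⊆ Set.Ioc (0:ℝ) τ := Set.Ioc_subset_Ioc_left hA0.le
    have hint_full := hEint τ hτ0
    have int1 : IntegrableOn (fun u => |(τ - u) * (K u - cZ * u ^ a)|) (Set.Ioc 0 A) :=
      MeasureTheory.IntegrableOn.mono_set hint_full.abs hsub1
    have int2 : IntegrableOn (fun u => |(τ - u) * (K u - cZ * u ^ a)|) (Set.Ioc A τ) :=
      MeasureTheory.IntegrableOn.mono_set hint_full.abs hsub2
    -- |E τ| ≤ full abs integral
    have habs : |E τ| ≤ ∫ u in Set.Ioc (0:ℝ) τ, |(τ - u) * (K u - cZ * u ^ a)| := by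
      simp only [hE_def]
      simpa [Real.norm_eq_abs, abs_mul] using
        MeasureTheory.norm_integral_le_integral_norm
          (μ := volume.restrict (Set.Ioc (0:ℝ) τ)) (fun u => (τ - u) * (K u - cZ * u ^ a))
    have hsplit : ∫ u in Set.Ioc (0:ℝ) τ, |(τ - u) * (K u - cZ * u ^ a)|
        = (∫ u in Set.Ioc (0:ℝ) A, |(τ - u) * (K u - cZ * u ^ a)|)
          + ∫ u in Set.Ioc A τ, |(τ - u) * (K u - cZ * u ^ a)| := by
      rw [← MeasureTheory.setIntegral_union (Set.Ioc_disjoint_Ioc_of_le le_rfl) measurableSet_Ioc int1 int2,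
        Set.Ioc_union_Ioc_eq_Ioc hA0.le hτ2]
    -- bound on [0, A]
    have hbound1 : ∫ u in Set.Ioc (0:ℝ) A, |(τ - u) * (K u - cZ * u ^ a)| ≤ τ * M := by
      have step : ∫ u in Set.Ioc (0:ℝ) A, |(τ - u) * (K u - cZ * u ^ a)|
          ≤ ∫ u in Set.Ioc (0:ℝ) A, τ * |K u - cZ * u ^ a| := by
        refine MeasureTheory.setIntegral_mono_on int1 (hM_int.const_mul τ)
          measurableSet_Ioc (fun u hu => ?_)
        rw [abs_mul]
        refine mul_le_mul_of_nonneg_right ?_ (abs_nonneg _)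
        rw [abs_of_nonneg (by linarith [hu.2] : 0 ≤ τ - u)]
        linarith [hu.1]
      rw [MeasureTheory.integral_const_mul] at step
      exact step.trans_eq rfl
    -- bound on [A, τ]
    have hbound2 : ∫ u in Set.Ioc A τ, |(τ - u) * (K u - cZ * u ^ a)|
        ≤ ε' * (τ ^ (a + 2) * C) := by
      have step1 : ∫ u in Set.Ioc A τ, |(τ - u) * (K u - cZ * u ^ a)|
          ≤ ∫ u in Set.Ioc A τ, ε' * ((τ - u) * u ^ a) := by
        refine MeasureTheory.setIntegral_mono_on int2
          (MeasureTheory.IntegrableOn.mono_set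
            ((linear_rpow_integrableOn (τ := τ) (c := τ) ha1).const_mul ε') hsub2)
          measurableSet_Ioc (fun u hu => ?_)
        have hu0 : (0:ℝ) < u := lt_of_lt_of_le hA0 hu.1.le
        have hmul : u ^ (3/2 - H) * u ^ a = 1 := by
          rw [← Real.rpow_add hu0, ha_def, show 3/2 - H + (H - 3/2) = 0 by ring,
            Real.rpow_zero]
        have hdecomp : K u - cZ * u ^ a = (K u * u ^ (3/2 - H) - cZ) * u ^ a := by
          rw [sub_mul, mul_assoc, hmul, mul_one]
        rw [abs_mul, hdecomp, abs_mul, abs_of_nonneg (Real.rpow_nonneg hu0.le a),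
          abs_of_nonneg (by linarith [hu.2] : 0 ≤ τ - u)]
        calc (τ - u) * (|K u * u ^ (3/2 - H) - cZ| * u ^ a)
            ≤ (τ - u) * (ε' * u ^ a) := by
              refine mul_le_mul_of_nonneg_left ?_ (by linarith [hu.2])
              exact mul_le_mul_of_nonneg_right (hAprop u hu.1.le)
                (Real.rpow_nonneg hu0.le a)
          _ = ε' * ((τ - u) * u ^ a) := by ring
      have step2 : ∫ u in Set.Ioc A τ, ε' * ((τ - u) * u ^ a)
          ≤ ∫ u in Set.Ioc (0:ℝ) τ, ε' * ((τ - u) * u ^ a) := by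
        refine MeasureTheory.setIntegral_mono_set
          ((linear_rpow_integrableOn (τ := τ) (c := τ) ha1).const_mul ε') ?_
          (HasSubset.Subset.eventuallyLE hsub2)
        filter_upwards [ae_restrict_mem measurableSet_Ioc] with u hu
        have : (0:ℝ) ≤ (τ - u) * u ^ a :=
          mul_nonneg (by linarith [hu.2]) (Real.rpow_nonneg hu.1.le a)
        positivity
      have step3 : ∫ u in Set.Ioc (0:ℝ) τ, ε' * ((τ - u) * u ^ a)
          = ε' * (τ ^ (a + 2) * C) := by
        rw [MeasureTheory.integral_const_mul, linear_rpow_integral ha1 τ hτ0.le, ← hC_def]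
      exact (step1.trans step2).trans_eq step3
    -- combine
    have hb : |E τ| ≤ τ * M + ε' * (τ ^ (a + 2) * C) :=
      habs.trans (hsplit.trans_le (add_le_add hbound1 hbound2))
    have e1 : τ ^ (1/2 - H) = τ * τ ^ (-H - 1/2) := by
      rw [show (1/2 - H : ℝ) = 1 + (-H - 1/2) by ring, Real.rpow_add hτ0, Real.rpow_one]
    have e2 : τ ^ (a + 2) * τ ^ (-H - 1/2) = 1 := by
      rw [← Real.rpow_add hτ0, ha_def, show H - 3/2 + 2 + (-H - 1/2) = 0 by ring,
        Real.rpow_zero]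
    calc ‖E τ * τ ^ (-H - 1/2)‖ = |E τ| * τ ^ (-H - 1/2) := by
          rw [Real.norm_eq_abs, abs_mul, abs_of_pos hrpos]
      _ ≤ (τ * M + ε' * (τ ^ (a + 2) * C)) * τ ^ (-H - 1/2) :=
          mul_le_mul_of_nonneg_right hb hrpos.le
      _ = M * (τ * τ ^ (-H - 1/2)) + ε' * C * (τ ^ (a + 2) * τ ^ (-H - 1/2)) := by ring
      _ = M * τ ^ (1/2 - H) + ε' * C := by rw [← e1, e2, mul_one]
      _ < ε / 2 + ε / 2 := add_lt_add hτ1 hε'C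
      _ = ε := by ring
  -- conclude
  have hfinal : Tendsto (fun τ : ℝ => cZ * C + E τ * τ ^ (-H - 1/2)) atTop (𝓝 (cZ * C)) := by
    have := (tendsto_const_nhds (x := cZ * C) (f := atTop)).add hEtend
    rwa [add_zero] at this
  refine hfinal.congr' ?_
  filter_upwards [eventually_gt_atTop (0:ℝ)] with τ hτ
  have hdecomp : (∫ u in (0:ℝ)..τ, (τ - u) * K u)
      = (∫ u in Set.Ioc (0:ℝ) τ, (τ - u) * (K u - cZ * u ^ a)) + cZ * C * τ ^ (a + 2) := by
    rw [intervalIntegral.integral_of_le hτ.le]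
    have : Set.EqOn (fun u : ℝ => (τ - u) * K u)
        (fun u : ℝ => (τ - u) * (K u - cZ * u ^ a) + (τ - u) * (cZ * u ^ a))
        (Set.Ioc 0 τ) := fun u _ => by simp only; ring
    rw [MeasureTheory.setIntegral_congr_fun measurableSet_Ioc this,
      MeasureTheory.integral_add (hEint τ hτ) (hmodelint τ), hmodel τ hτ.le]
  have e2 : τ ^ (a + 2) * τ ^ (-H - 1/2) = 1 := by
    rw [← Real.rpow_add hτ, ha_def, show H - 3/2 + 2 + (-H - 1/2) = 0 by ring,
      Real.rpow_zero]
  simp only [hE_def]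
  rw [hdecomp, add_mul, mul_assoc, e2, mul_one, add_comm]
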